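/- Let 1 < p < ∞, α ≥ 0, and ξ ∈ ∂𝔻. Define f_{c,ξ} = ĥ_c/‖ĥ_c‖_{A^p_α} where ĥ_c(z) = (ξ−z)^{−c} and c < (2+α)/p. Let g ∈ H^∞(𝔻) be a bounded holomorphic function that extends continuously to 𝔻̄ ∩ B(ξ, ε) for some ε > 0. Then lim_{c → (2+α)/p} ‖f_{c,ξ} · g‖_{A^p_α} = |g(ξ)|. -/

import Mathlib

open Metric MeasureTheory Filter Set

set_option maxHeartbeats 1000000

noncomputable section AuxBerg

lemma abs_sub_pos_of_mem (ξ : ℂ) (hξ : ‖ξ‖ = 1) {z : ℂ} (hz : z ∈ ball (0:ℂ) 1) :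
    0 < ‖ξ - z‖ := by
  have hz1 : ‖z‖ < 1 := by simpa [Complex.dist_eq] using hz
  have : ξ ≠ z := by rintro rfl; exact absurd hξ (by linarith)
  exact norm_pos_iff.mpr (sub_ne_zero.mpr this)

lemma abs_sub_lt_two (ξ : ℂ) (hξ : ‖ξ‖ = 1) {z : ℂ} (hz : z ∈ ball (0:ℂ) 1) :
    ‖ξ - z‖ < 2 := by
  have hz1 : ‖z‖ < 1 := by simpa [Complex.dist_eq] using hz
  calc ‖ξ - z‖ ≤ ‖ξ‖ + ‖z‖ := norm_sub_le ξ z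
  _ < 2 := by rw [hξ]; linarith

lemma one_sub_sq_le (ξ : ℂ) (hξ : ‖ξ‖ = 1) {z : ℂ} (hz : z ∈ ball (0:ℂ) 1) :
    1 - ‖z‖ ^ 2 ≤ 2 * ‖ξ - z‖ := by
  have hz1 : ‖z‖ < 1 := by simpa [Complex.dist_eq] using hz
  have h1 : ‖ξ‖ - ‖z‖ ≤ ‖ξ - z‖ := norm_sub_norm_le ξ z
  rw [hξ] at h1
  nlinarith [norm_nonneg z, norm_nonneg (ξ - z)]

/-- Finiteness of the model lintegral. -/
lemma lint_finite (ξ : ℂ) (hξ : ‖ξ‖ = 1) {t : ℝ} (ht : -2 < t) (ht0 : t ≤ 0) :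
    ∫⁻ z in ball (0:ℂ) 1, ENNReal.ofReal (‖ξ - z‖ ^ t) < ⊤ := by
  set A : ℕ → Set ℂ := fun k => ball ξ (2 * (1/2)^k) \ ball ξ ((1/2)^k) with hA
  have hcover : ball (0:ℂ) 1 ⊆ ⋃ k, A k := by
    intro z hz
    have hr0 : 0 < ‖ξ - z‖ := abs_sub_pos_of_mem ξ hξ hz
    have hr2 : ‖ξ - z‖ < 2 := abs_sub_lt_two ξ hξ hz
    have hd : dist z ξ = ‖ξ - z‖ := by
      rw [Complex.dist_eq, norm_sub_rev]
    have hex : ∃ n : ℕ, (1/2:ℝ)^n ≤ ‖ξ - z‖ :=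
      (exists_pow_lt_of_lt_one hr0 (by norm_num)).imp fun n h => h.le
    refine mem_iUnion.2 ⟨Nat.find hex, ?_, ?_⟩
    · simp only [mem_ball, hd]
      rcases Nat.eq_zero_or_pos (Nat.find hex) with h0 | hpos
      · rw [h0]; norm_num; exact hr2
      · obtain ⟨j, hj⟩ := Nat.exists_eq_succ_of_ne_zero hpos.ne'
        have hmin := Nat.find_min hex (m := j) (by omega)
        push_neg at hmin
        rw [hj]
        calc ‖ξ - z‖ < (1/2:ℝ)^j := hmin
        _ = 2 * (1/2:ℝ)^(j+1) := by ring
    · simp only [mem_ball, hd, not_lt]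
      exact Nat.find_spec hex
  have key : ∀ k : ℕ, ∫⁻ z in A k, ENNReal.ofReal (‖ξ - z‖ ^ t)
      ≤ ENNReal.ofReal 16 * ENNReal.ofReal ((1/2:ℝ)^(t+2)) ^ k := by
    intro k
    set q : ℝ := (1/2:ℝ)^k with hqdef
    have hq : (0:ℝ) < q := by positivity
    have step1 : ∫⁻ z in A k, ENNReal.ofReal (‖ξ - z‖ ^ t)
        ≤ ENNReal.ofReal (q ^ t) * volume (A k) := by
      rw [← setLIntegral_const (A k) _]
      refine setLIntegral_mono' (measurableSet_ball.diff measurableSet_ball) fun z hz => ?_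
      refine ENNReal.ofReal_le_ofReal ?_
      have hge : q ≤ ‖ξ - z‖ := by
        have h2 := hz.2
        simp only [mem_ball, Complex.dist_eq, not_lt] at h2
        rw [norm_sub_rev]
        exact h2
      exact Real.rpow_le_rpow_of_nonpos hq hge ht0
    have step2 : volume (A k) ≤ ENNReal.ofReal (16 * q^2) := by
      calc volume (A k) ≤ volume (ball ξ (2 * q)) := measure_mono diff_subset
      _ = ENNReal.ofReal (2 * q) ^ 2 * NNReal.pi := Complex.volume_ball _ _
      _ ≤ ENNReal.ofReal (2 * q) ^ 2 * ENNReal.ofReal 4 := by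
          gcongr
          rw [← ENNReal.ofReal_coe_nnreal]
          exact ENNReal.ofReal_le_ofReal (by simpa using Real.pi_le_four)
      _ = ENNReal.ofReal ((2*q)^2 * 4) := by
          rw [← ENNReal.ofReal_pow (by positivity), ← ENNReal.ofReal_mul (by positivity)]
      _ ≤ ENNReal.ofReal (16 * q^2) := ENNReal.ofReal_le_ofReal (by nlinarith)
    have heq : q ^ t * (16 * q^2) = 16 * ((1/2:ℝ)^(t+2))^k := by
      have h2 : q^(2:ℕ) = q ^ ((2:ℕ):ℝ) := (Real.rpow_natCast q 2).symm
      have hqr : q = (1/2:ℝ) ^ ((k:ℕ):ℝ) := (Real.rpow_natCast _ k).symm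
      have hmul : q ^ t * q ^ ((2:ℕ):ℝ) = q ^ (t+2) := by
        rw [← Real.rpow_add hq]; norm_num
      calc q ^ t * (16 * q^2) = 16 * (q ^ t * q ^ ((2:ℕ):ℝ)) := by rw [← h2]; ring
      _ = 16 * q ^ (t+2) := by rw [hmul]
      _ = 16 * ((1/2:ℝ)^(t+2))^k := by
          rw [hqr, ← Real.rpow_mul (by norm_num : (0:ℝ) ≤ 1/2), mul_comm ((k:ℕ):ℝ) (t+2),
            Real.rpow_mul (by norm_num : (0:ℝ) ≤ 1/2), Real.rpow_natCast]
    calc ∫⁻ z in A k, ENNReal.ofReal (‖ξ - z‖ ^ t)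
        ≤ ENNReal.ofReal (q ^ t) * ENNReal.ofReal (16 * q^2) := by
          exact le_trans step1 (by gcongr)
      _ = ENNReal.ofReal (q ^ t * (16 * q^2)) := by
          rw [← ENNReal.ofReal_mul (by positivity)]
      _ = ENNReal.ofReal (16 * ((1/2:ℝ)^(t+2))^k) := by rw [heq]
      _ = ENNReal.ofReal 16 * ENNReal.ofReal ((1/2:ℝ)^(t+2)) ^ k := by
          rw [ENNReal.ofReal_mul (by norm_num), ENNReal.ofReal_pow (by positivity)]
  have hρ : ENNReal.ofReal ((1/2:ℝ)^(t+2)) < 1 := by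
    rw [ENNReal.ofReal_lt_one]
    exact Real.rpow_lt_one (by norm_num) (by norm_num) (by linarith)
  calc ∫⁻ z in ball (0:ℂ) 1, ENNReal.ofReal (‖ξ - z‖ ^ t)
      ≤ ∫⁻ z in ⋃ k, A k, ENNReal.ofReal (‖ξ - z‖ ^ t) := lintegral_mono_set hcover
    _ ≤ ∑' k, ∫⁻ z in A k, ENNReal.ofReal (‖ξ - z‖ ^ t) := lintegral_iUnion_le _ _
    _ ≤ ∑' k : ℕ, ENNReal.ofReal 16 * ENNReal.ofReal ((1/2:ℝ)^(t+2)) ^ k :=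
        ENNReal.tsum_le_tsum key
    _ = ENNReal.ofReal 16 * (1 - ENNReal.ofReal ((1/2:ℝ)^(t+2)))⁻¹ := by
        rw [ENNReal.tsum_mul_left, ENNReal.tsum_geometric]
    _ < ⊤ := by
        refine ENNReal.mul_lt_top ENNReal.ofReal_lt_top ?_
        rw [ENNReal.inv_lt_top]
        exact tsub_pos_of_lt hρ

end AuxBerg

section AuxBerg2
open ENNReal

lemma contOn_k (ξ : ℂ) (hξ : ‖ξ‖ = 1) (u : ℝ) :
    ContinuousOn (fun z => ‖ξ - z‖ ^ u) (ball (0:ℂ) 1) := by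
  intro z hz
  have h0 : ‖ξ - z‖ ≠ 0 := (abs_sub_pos_of_mem ξ hξ hz).ne'
  exact ((continuous_norm.comp (continuous_const.sub continuous_id)).continuousAt.rpow_const
    (Or.inl h0)).continuousWithinAt

lemma contOn_w (α : ℝ) (hα : 0 ≤ α) :
    Continuous (fun z : ℂ => (1+α) * (1 - ‖z‖ ^ 2) ^ α) := by
  refine continuous_const.mul ?_
  have : Continuous fun z : ℂ => 1 - ‖z‖ ^ 2 :=
    continuous_const.sub ((continuous_norm).pow 2)
  exact continuous_iff_continuousAt.2 fun z => this.continuousAt.rpow_const (Or.inr hα)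

lemma integrableOn_model (ξ : ℂ) (hξ : ‖ξ‖ = 1) {t : ℝ} (ht : -2 < t) (ht0 : t ≤ 0) :
    IntegrableOn (fun z => ‖ξ - z‖ ^ t) (ball (0:ℂ) 1) := by
  constructor
  · exact (contOn_k ξ hξ t).aestronglyMeasurable measurableSet_ball
  · rw [hasFiniteIntegral_iff_ofReal (Eventually.of_forall fun z => Real.rpow_nonneg
      (norm_nonneg _) _)]
    exact lint_finite ξ hξ ht ht0

lemma integrableOn_weighted (ξ : ℂ) (hξ : ‖ξ‖ = 1) {p α c : ℝ}
    (hα : 0 ≤ α) (hc1 : α < c * p) (hc2 : c * p < 2 + α)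
    (u : ℂ → ℝ) (hu : ContinuousOn u (ball (0:ℂ) 1)) (B : ℝ)
    (hB : ∀ z ∈ ball (0:ℂ) 1, |u z| ≤ B) :
    IntegrableOn
      (fun z => u z * (‖ξ - z‖ ^ (-(c*p)) * ((1+α) * (1 - ‖z‖ ^ 2) ^ α)))
      (ball (0:ℂ) 1) := by
  have hB0 : 0 ≤ B := le_trans (abs_nonneg _) (hB 0 (by simp))
  have hbnd : ∀ z ∈ ball (0:ℂ) 1,
      ‖u z * (‖ξ - z‖ ^ (-(c*p)) * ((1+α) * (1 - ‖z‖ ^ 2) ^ α))‖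
        ≤ (B * ((1+α) * 2 ^ α)) * ‖ξ - z‖ ^ (α - c*p) := by
    intro z hz
    have hz1 : ‖z‖ < 1 := by simpa [Complex.dist_eq] using hz
    have h0 : 0 < ‖ξ - z‖ := abs_sub_pos_of_mem ξ hξ hz
    have hwnn : (0:ℝ) ≤ 1 - ‖z‖ ^ 2 := by nlinarith [norm_nonneg z]
    have h1 : (1 - ‖z‖ ^ 2) ^ α ≤ (2 * ‖ξ - z‖) ^ α :=
      Real.rpow_le_rpow hwnn (one_sub_sq_le ξ hξ hz) hα
    have h2 : (2 * ‖ξ - z‖) ^ α = 2 ^ α * ‖ξ - z‖ ^ α :=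
      Real.mul_rpow (by norm_num) h0.le
    have h3 : ‖ξ - z‖ ^ (-(c*p)) * ‖ξ - z‖ ^ α
        = ‖ξ - z‖ ^ (α - c*p) := by
      rw [← Real.rpow_add h0]; ring_nf
    have hk : (0:ℝ) ≤ ‖ξ - z‖ ^ (-(c*p)) := Real.rpow_nonneg h0.le _
    have hwa : (0:ℝ) ≤ (1 - ‖z‖ ^ 2) ^ α := Real.rpow_nonneg hwnn _
    rw [norm_mul, norm_mul, norm_mul]
    have e1 : ‖‖ξ - z‖ ^ (-(c*p))‖ = ‖ξ - z‖ ^ (-(c*p)) :=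
      Real.norm_of_nonneg hk
    have e2 : ‖(1+α:ℝ)‖ = 1 + α := Real.norm_of_nonneg (by linarith)
    have e3 : ‖(1 - ‖z‖ ^ 2) ^ α‖ = (1 - ‖z‖ ^ 2) ^ α :=
      Real.norm_of_nonneg hwa
    rw [e1, e2, e3]
    have hu1 : ‖u z‖ ≤ B := hB z hz
    calc ‖u z‖ * (‖ξ - z‖ ^ (-(c*p)) * ((1+α) * (1 - ‖z‖ ^ 2) ^ α))
        ≤ B * (‖ξ - z‖ ^ (-(c*p)) * ((1+α) * (2 ^ α * ‖ξ - z‖ ^ α))) := by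
          rw [← h2]
          have hnn : 0 ≤ ‖ξ - z‖ ^ (-(c*p)) * ((1+α) * (1 - ‖z‖ ^ 2) ^ α) := by
            positivity
          refine mul_le_mul hu1 ?_ hnn hB0
          gcongr
      _ = (B * ((1+α) * 2 ^ α)) * (‖ξ - z‖ ^ (-(c*p)) * ‖ξ - z‖ ^ α) := by
          ring
      _ = (B * ((1+α) * 2 ^ α)) * ‖ξ - z‖ ^ (α - c*p) := by rw [h3]
  have hint : IntegrableOn
      (fun z => (B * ((1+α) * 2 ^ α)) * ‖ξ - z‖ ^ (α - c*p)) (ball (0:ℂ) 1) :=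
    (integrableOn_model ξ hξ (by linarith) (by linarith)).const_mul _
  refine Integrable.mono' hint ?_ ?_
  · exact ((hu.mul ((contOn_k ξ hξ (-(c*p))).mul
      ((contOn_w α hα).continuousOn))).aestronglyMeasurable measurableSet_ball)
  · exact (ae_restrict_mem measurableSet_ball).mono hbnd

end AuxBerg2

section AuxBerg3

lemma one_sub_half_rpow_le (s : ℝ) (hs0 : 0 < s) : 1 - (1/2:ℝ)^s ≤ s := by
  have hexp2 : 1 - Real.log 2 * s ≤ (1/2:ℝ)^s := by
    rw [Real.rpow_def_of_pos (by norm_num) s, one_div, Real.log_inv]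
    calc 1 - Real.log 2 * s = -(Real.log 2 * s) + 1 := by ring
    _ ≤ Real.exp (-(Real.log 2 * s)) := Real.add_one_le_exp _
    _ = Real.exp (-Real.log 2 * s) := by ring_nf
  have h2 : Real.log 2 ≤ 1 := by
    have := Real.log_le_sub_one_of_pos (by norm_num : (0:ℝ) < 2)
    linarith
  have hlogs : Real.log 2 * s ≤ s := by
    have h0 : 0 < Real.log 2 := Real.log_pos (by norm_num)
    nlinarith
  linarith

lemma lint_lower (ξ : ℂ) (hξ : ‖ξ‖ = 1) {p α c : ℝ} (hα : 0 ≤ α)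
    (hc0 : 0 < c * p) (hc2 : c * p < 2 + α) :
    ENNReal.ofReal (((2:ℝ) ^ (-(2+α)-α) * (3/64)) / (2 + α - c*p)) ≤
      ∫⁻ z in ball (0:ℂ) 1,
        ENNReal.ofReal (‖ξ - z‖ ^ (-(c*p)) * ((1+α) * (1 - ‖z‖ ^ 2) ^ α)) := by
  set s : ℝ := 2 + α - c*p with hs_def
  have hs : 0 < s := by simp only [hs_def]; linarith
  set C₀ : ℝ := (2:ℝ) ^ (-(2+α)-α) * (3/64) with hC₀
  have hC₀pos : 0 < C₀ := by positivity
  set B : ℕ → Set ℂ := fun k => ball (((1 - (1/2:ℝ)^k : ℝ) : ℂ) * ξ) ((1/2:ℝ)^k/8) with hB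
  -- geometric facts
  have habs_center : ∀ k : ℕ, ‖ξ - ((1 - (1/2:ℝ)^k : ℝ) : ℂ) * ξ‖ = (1/2:ℝ)^k := by
    intro k
    have : ξ - ((1 - (1/2:ℝ)^k : ℝ) : ℂ) * ξ = (((1/2:ℝ)^k : ℝ) : ℂ) * ξ := by
      push_cast; ring
    rw [this, norm_mul, Complex.norm_real, Real.norm_eq_abs, hξ, mul_one, abs_of_nonneg (by positivity)]
  have hmem : ∀ k : ℕ, ∀ z ∈ B k,
      ‖z‖ ≤ 1 - 7*(1/2:ℝ)^k/8 ∧ ‖ξ - z‖ ≤ 2*(1/2:ℝ)^k := by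
    intro k z hz
    set d : ℝ := (1/2:ℝ)^k with hd_def
    have hd : 0 < d := by positivity
    have hd1 : d ≤ 1 := by
      rw [hd_def]
      exact pow_le_one₀ (by norm_num) (by norm_num)
    have hdist : ‖z - ((1 - d : ℝ) : ℂ) * ξ‖ < d/8 := by
      have hz' := hz
      rw [hB] at hz'
      rw [mem_ball, Complex.dist_eq] at hz'
      exact hz'
    have hcenter : ‖((1 - d : ℝ) : ℂ) * ξ‖ = 1 - d := by
      rw [norm_mul, Complex.norm_real, Real.norm_eq_abs, hξ, mul_one, abs_of_nonneg (by linarith)]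
    constructor
    · calc ‖z‖ = ‖((1 - d : ℝ) : ℂ) * ξ + (z - ((1 - d : ℝ) : ℂ) * ξ)‖ := by
            ring_nf
      _ ≤ ‖((1 - d : ℝ) : ℂ) * ξ‖ + ‖z - ((1 - d : ℝ) : ℂ) * ξ‖ :=
            norm_add_le _ _
      _ ≤ (1 - d) + d/8 := by rw [hcenter]; linarith
      _ = 1 - 7*d/8 := by ring
    · calc ‖ξ - z‖
          = ‖(ξ - ((1 - d : ℝ) : ℂ) * ξ) - (z - ((1 - d : ℝ) : ℂ) * ξ)‖ := by ring_nf
      _ ≤ ‖ξ - ((1 - d : ℝ) : ℂ) * ξ‖ + ‖z - ((1 - d : ℝ) : ℂ) * ξ‖ :=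
            norm_sub_le _ _
      _ ≤ d + d/8 := by rw [habs_center k]; linarith
      _ ≤ 2*d := by linarith
  have hsub : (⋃ k, B k) ⊆ ball (0:ℂ) 1 := by
    intro z hz
    obtain ⟨k, hk⟩ := mem_iUnion.1 hz
    have := (hmem k z hk).1
    have hd : (0:ℝ) < (1/2:ℝ)^k := by positivity
    simp only [mem_ball, Complex.dist_eq, sub_zero]
    calc ‖z‖ ≤ 1 - 7*(1/2:ℝ)^k/8 := this
    _ < 1 := by linarith
  have hdisj : Pairwise (Function.onFun Disjoint B) := by
    have key : ∀ j k : ℕ, j < k → Disjoint (B j) (B k) := by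
      intro j k hjk
      refine Metric.ball_disjoint_ball ?_
      have hjk1 : (1/2:ℝ)^k ≤ (1/2:ℝ)^j / 2 := by
        have : (1/2:ℝ)^k ≤ (1/2:ℝ)^(j+1) :=
          pow_le_pow_of_le_one (by norm_num) (by norm_num) (by omega)
        rw [pow_succ] at this
        linarith
      have hdj : (0:ℝ) < (1/2:ℝ)^j := by positivity
      have hdist : dist (((1 - (1/2:ℝ)^j : ℝ) : ℂ) * ξ) (((1 - (1/2:ℝ)^k : ℝ) : ℂ) * ξ)
          = (1/2:ℝ)^j - (1/2:ℝ)^k := by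
        rw [Complex.dist_eq]
        have : ((1 - (1/2:ℝ)^j : ℝ) : ℂ) * ξ - ((1 - (1/2:ℝ)^k : ℝ) : ℂ) * ξ
            = (((1/2:ℝ)^k - (1/2:ℝ)^j : ℝ) : ℂ) * ξ := by push_cast; ring
        rw [this, norm_mul, Complex.norm_real, Real.norm_eq_abs, hξ, mul_one, abs_of_nonpos (by linarith)]
        ring
      rw [hdist]
      linarith
    intro j k hjk
    rcases lt_or_gt_of_ne hjk with h | h
    · exact key j k h
    · exact (key k j h).symm
  -- lower bound on each ball
  have hterm : ∀ k : ℕ, ENNReal.ofReal (C₀ * ((1/2:ℝ)^s)^k)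
      ≤ ∫⁻ z in B k,
        ENNReal.ofReal (‖ξ - z‖ ^ (-(c*p)) * ((1+α) * (1 - ‖z‖ ^ 2) ^ α)) := by
    intro k
    set d : ℝ := (1/2:ℝ)^k with hd_def
    have hd : 0 < d := by positivity
    have hlb : ∀ z ∈ B k, (2*d) ^ (-(c*p)) * (d/2) ^ α
        ≤ ‖ξ - z‖ ^ (-(c*p)) * ((1+α) * (1 - ‖z‖ ^ 2) ^ α) := by
      intro z hz
      obtain ⟨hz1, hz2⟩ := hmem k z hz
      have hzball : z ∈ ball (0:ℂ) 1 := hsub (mem_iUnion.2 ⟨k, hz⟩)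
      have h0 : 0 < ‖ξ - z‖ := abs_sub_pos_of_mem ξ hξ hzball
      have hk1 : (2*d) ^ (-(c*p)) ≤ ‖ξ - z‖ ^ (-(c*p)) :=
        Real.rpow_le_rpow_of_nonpos h0 hz2 (by linarith)
      have hzabs : ‖z‖ < 1 := by simpa [Complex.dist_eq] using hzball
      have hw1 : d/2 ≤ 1 - ‖z‖ ^ 2 := by
        nlinarith [norm_nonneg z]
      have hk2 : (d/2) ^ α ≤ (1 - ‖z‖ ^ 2) ^ α :=
        Real.rpow_le_rpow (by positivity) hw1 hα
      calc (2*d) ^ (-(c*p)) * (d/2) ^ α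
          ≤ ‖ξ - z‖ ^ (-(c*p)) * (d/2) ^ α := by
            gcongr
        _ ≤ ‖ξ - z‖ ^ (-(c*p)) * ((1+α) * (1 - ‖z‖ ^ 2) ^ α) := by
            have : (d/2) ^ α ≤ (1+α) * (1 - ‖z‖ ^ 2) ^ α := by
              calc (d/2) ^ α ≤ (1 - ‖z‖ ^ 2) ^ α := hk2
              _ ≤ (1+α) * (1 - ‖z‖ ^ 2) ^ α := by
                  nlinarith [Real.rpow_nonneg (by nlinarith [norm_nonneg z] :
                    (0:ℝ) ≤ 1 - ‖z‖ ^ 2) α]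
            gcongr
    have hvol : volume (B k) = ENNReal.ofReal (d/8) ^ 2 * NNReal.pi := Complex.volume_ball _ _
    calc ENNReal.ofReal (C₀ * ((1/2:ℝ)^s)^k)
        ≤ ENNReal.ofReal ((2*d) ^ (-(c*p)) * (d/2) ^ α * ((d/8)^2 * 3)) := by
          refine ENNReal.ofReal_le_ofReal ?_
          have e1 : (2*d) ^ (-(c*p)) = 2 ^ (-(c*p)) * d ^ (-(c*p)) :=
            Real.mul_rpow (by norm_num) hd.le
          have e2 : (d/2) ^ α = d ^ α * 2 ^ (-α) := by
            rw [Real.div_rpow hd.le (by norm_num), Real.rpow_neg (by norm_num)]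
            ring
          have e3 : d ^ (-(c*p)) * (d ^ α * d ^ ((2:ℕ):ℝ)) = d ^ s := by
            rw [← Real.rpow_add hd, ← Real.rpow_add hd]
            norm_num
            rw [hs_def]; ring_nf
          have e4 : d ^ s = ((1/2:ℝ)^s)^k := by
            rw [hd_def, ← Real.rpow_natCast ((1/2:ℝ)) k, ← Real.rpow_mul (by norm_num),
              mul_comm (k:ℝ) s, Real.rpow_mul (by norm_num), Real.rpow_natCast]
          have h2exp : (2:ℝ) ^ (-(2+α)) ≤ (2:ℝ) ^ (-(c*p)) :=
            Real.rpow_le_rpow_of_exponent_le one_le_two (by linarith)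
          have hC₀eq : C₀ = (2:ℝ) ^ (-(2+α)) * 2 ^ (-α) * (3/64) := by
            rw [hC₀, ← Real.rpow_add (by norm_num)]
            ring_nf
          have hd2 : (d:ℝ)^(2:ℕ) = d ^ ((2:ℕ):ℝ) := (Real.rpow_natCast d 2).symm
          calc C₀ * ((1/2:ℝ)^s)^k = ((2:ℝ) ^ (-(2+α)) * 2 ^ (-α) * (3/64)) * d ^ s := by
                rw [hC₀eq, e4]
          _ ≤ ((2:ℝ) ^ (-(c*p)) * 2 ^ (-α) * (3/64)) * d ^ s := by
              have hds : (0:ℝ) ≤ d ^ s := Real.rpow_nonneg hd.le _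
              have h2a : (0:ℝ) ≤ (2:ℝ) ^ (-α) := Real.rpow_nonneg (by norm_num) _
              have := mul_le_mul_of_nonneg_right h2exp h2a
              nlinarith
          _ = (2*d) ^ (-(c*p)) * (d/2) ^ α * ((d/8)^2 * 3) := by
              rw [e1, e2, ← e3, ← hd2]
              ring
      _ ≤ ENNReal.ofReal ((2*d) ^ (-(c*p)) * (d/2) ^ α) * ENNReal.ofReal ((d/8)^2 * 3) := by
          rw [← ENNReal.ofReal_mul (by positivity)]
      _ ≤ ENNReal.ofReal ((2*d) ^ (-(c*p)) * (d/2) ^ α) * volume (B k) := by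
          gcongr
          rw [hvol, ← ENNReal.ofReal_pow (by positivity), ENNReal.ofReal_mul (by positivity)]
          gcongr
          rw [← ENNReal.ofReal_coe_nnreal]
          exact ENNReal.ofReal_le_ofReal (by simpa using Real.pi_gt_three.le)
      _ ≤ ∫⁻ z in B k,
            ENNReal.ofReal (‖ξ - z‖ ^ (-(c*p)) * ((1+α) * (1 - ‖z‖ ^ 2) ^ α)) := by
          rw [← setLIntegral_const (B k) (ENNReal.ofReal ((2*d) ^ (-(c*p)) * (d/2) ^ α))]
          
          refine setLIntegral_mono' measurableSet_ball fun z hz => ?_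
          exact ENNReal.ofReal_le_ofReal (hlb z hz)
  -- assemble
  have hρ : (0:ℝ) ≤ (1/2:ℝ)^s := Real.rpow_nonneg (by norm_num) _
  have hρ1 : 1 - (1/2:ℝ)^s ≤ s := one_sub_half_rpow_le s hs
  calc ENNReal.ofReal (C₀ / s)
      = ENNReal.ofReal C₀ / ENNReal.ofReal s := ENNReal.ofReal_div_of_pos hs
    _ ≤ ENNReal.ofReal C₀ / ENNReal.ofReal (1 - (1/2:ℝ)^s) := by
        exact ENNReal.div_le_div_left (ENNReal.ofReal_le_ofReal hρ1) _
    _ = ENNReal.ofReal C₀ * (1 - ENNReal.ofReal ((1/2:ℝ)^s))⁻¹ := by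
        rw [div_eq_mul_inv, ENNReal.ofReal_sub 1 hρ, ENNReal.ofReal_one]
    _ = ∑' k : ℕ, ENNReal.ofReal C₀ * ENNReal.ofReal ((1/2:ℝ)^s) ^ k := by
        rw [ENNReal.tsum_mul_left, ENNReal.tsum_geometric]
    _ = ∑' k : ℕ, ENNReal.ofReal (C₀ * ((1/2:ℝ)^s)^k) := by
        congr 1; funext k
        rw [ENNReal.ofReal_mul hC₀pos.le, ENNReal.ofReal_pow hρ]
    _ ≤ ∑' k : ℕ, ∫⁻ z in B k,
          ENNReal.ofReal (‖ξ - z‖ ^ (-(c*p)) * ((1+α) * (1 - ‖z‖ ^ 2) ^ α)) :=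
        ENNReal.tsum_le_tsum hterm
    _ = ∫⁻ z in ⋃ k, B k,
          ENNReal.ofReal (‖ξ - z‖ ^ (-(c*p)) * ((1+α) * (1 - ‖z‖ ^ 2) ^ α)) :=
        (lintegral_iUnion (fun k => measurableSet_ball) hdisj _).symm
    _ ≤ _ := lintegral_mono_set hsub

end AuxBerg3


/-- The `A^p_α` norm (as an integral over the unit disk with the weight
`(1+α)(1-|z|²)^α`). -/
noncomputable def bergNorm (p α : ℝ) (f : ℂ → ℂ) : ℝ :=
  (∫ z in ball (0 : ℂ) 1,
      ‖f z‖ ^ p * ((1 + α) * (1 - ‖z‖ ^ 2) ^ α)) ^ (1 / p)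

/-- For `ĥ_c(z) = (ξ-z)^{-c}` and `g ∈ H^∞` extending continuously to `𝔻̄ ∩ B(ξ,ε)`,
`‖(ĥ_c/‖ĥ_c‖)·g‖_{A^p_α} → |g(ξ)|` as `c ↑ (2+α)/p`. -/
theorem stmt_16 (p α : ℝ) (hp : 1 < p) (hα : 0 ≤ α) (ξ : ℂ) (hξ : ‖ξ‖ = 1)
    (g : ℂ → ℂ) (hgdiff : DifferentiableOn ℂ g (ball (0 : ℂ) 1))
    (hgbdd : ∃ C : ℝ, ∀ z ∈ ball (0 : ℂ) 1, ‖g z‖ ≤ C)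
    (ε : ℝ) (hε : 0 < ε)
    (hgcont : ContinuousOn g (closedBall (0 : ℂ) 1 ∩ ball ξ ε)) :
    Filter.Tendsto
      (fun c : ℝ =>
        bergNorm p α (fun z => (ξ - z) ^ (-(c : ℂ)) * g z) /
          bergNorm p α (fun z => (ξ - z) ^ (-(c : ℂ))))
      (nhdsWithin ((2 + α) / p) (Set.Iio ((2 + α) / p)))
      (nhds (‖g ξ‖)) := by
  obtain ⟨C, hC⟩ := hgbdd
  have hp0 : (0:ℝ) < p := by linarith
  set L : ℝ := (2 + α) / p with hL
  set w : ℂ → ℝ := fun z => (1 + α) * (1 - ‖z‖ ^ 2) ^ α with hw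
  set k : ℝ → ℂ → ℝ := fun c z => ‖ξ - z‖ ^ (-(c * p)) with hk
  set F : ℝ → ℝ := fun c => ∫ z in ball (0:ℂ) 1, k c z * w z with hF
  set G : ℝ → ℝ := fun c => ∫ z in ball (0:ℂ) 1, ‖g z‖ ^ p * (k c z * w z) with hG
  set a : ℝ := ‖g ξ‖ ^ p with ha
  have hann : 0 ≤ a := Real.rpow_nonneg (norm_nonneg _) _
  have hLp : L * p = 2 + α := by rw [hL]; field_simp
  have hLgt : α / p < L := by
    rw [hL, div_lt_div_iff_of_pos_right hp0]
    linarith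
  have hmem : Set.Ioo (α/p) L ∈ nhdsWithin L (Set.Iio L) :=
    Ioo_mem_nhdsLT_of_mem ⟨hLgt, le_refl L⟩
  have hcm : ∀ c ∈ Set.Ioo (α/p) L, α < c * p ∧ c * p < 2 + α := by
    intro c hc
    constructor
    · calc α = (α/p) * p := by field_simp
      _ < c * p := mul_lt_mul_of_pos_right hc.1 hp0
    · calc c * p < L * p := mul_lt_mul_of_pos_right hc.2 hp0
      _ = 2 + α := hLp
  -- continuity of |g|^p
  have hgc : ContinuousOn g (ball (0:ℂ) 1) := hgdiff.continuousOn
  have hgpc : ContinuousOn (fun z => ‖g z‖ ^ p) (ball (0:ℂ) 1) := fun z hz =>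
    (continuous_norm.continuousAt.comp_continuousWithinAt (hgc z hz)).rpow_const (Or.inr hp0.le)
  set C' : ℝ := max C 0 with hC'
  have hgb : ∀ z ∈ ball (0:ℂ) 1, |‖g z‖ ^ p| ≤ C' ^ p := by
    intro z hz
    rw [abs_of_nonneg (Real.rpow_nonneg (norm_nonneg _) _)]
    exact Real.rpow_le_rpow (norm_nonneg _) (le_trans (hC z hz) (le_max_left _ _)) hp0.le
  -- integrability
  have hIF : ∀ c ∈ Set.Ioo (α/p) L, IntegrableOn (fun z => k c z * w z) (ball (0:ℂ) 1) := by
    intro c hc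
    have h := integrableOn_weighted ξ hξ hα (hcm c hc).1 (hcm c hc).2 (fun _ => (1:ℝ))
      continuousOn_const 1 (by intro z _; simp)
    simpa using h
  have hIG : ∀ c ∈ Set.Ioo (α/p) L,
      IntegrableOn (fun z => ‖g z‖ ^ p * (k c z * w z)) (ball (0:ℂ) 1) :=
    fun c hc => integrableOn_weighted ξ hξ hα (hcm c hc).1 (hcm c hc).2 _ hgpc (C'^p) hgb
  -- nonnegativity
  have hknn : ∀ c z, 0 ≤ k c z := fun c z => Real.rpow_nonneg (norm_nonneg _) _
  have hwnn : ∀ z ∈ ball (0:ℂ) 1, 0 ≤ w z := by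
    intro z hz
    have hz1 : ‖z‖ < 1 := by simpa [Complex.dist_eq] using hz
    have h1 : (0:ℝ) ≤ 1 - ‖z‖ ^ 2 := by nlinarith [norm_nonneg z]
    exact mul_nonneg (by linarith) (Real.rpow_nonneg h1 _)
  have hFnn : ∀ c, 0 ≤ F c := fun c =>
    setIntegral_nonneg measurableSet_ball (fun z hz => mul_nonneg (hknn c z) (hwnn z hz))
  have hGnn : ∀ c, 0 ≤ G c := fun c =>
    setIntegral_nonneg measurableSet_ball (fun z hz =>
      mul_nonneg (Real.rpow_nonneg (norm_nonneg _) _)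
        (mul_nonneg (hknn c z) (hwnn z hz)))
  -- lower bound on F and divergence
  set C₀ : ℝ := (2:ℝ) ^ (-(2+α)-α) * (3/64) with hC₀
  have hC₀pos : 0 < C₀ := by positivity
  have hFlow : ∀ c ∈ Set.Ioo (α/p) L, C₀ / (2 + α - c * p) ≤ F c := by
    intro c hc
    obtain ⟨h1, h2⟩ := hcm c hc
    have h0cp : 0 < c * p := lt_of_le_of_lt hα h1
    have hl := lint_lower ξ hξ hα h0cp h2
    have heq : ENNReal.ofReal (F c) = ∫⁻ z in ball (0:ℂ) 1, ENNReal.ofReal (k c z * w z) :=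
      ofReal_integral_eq_lintegral_ofReal (hIF c hc)
        ((ae_restrict_mem measurableSet_ball).mono fun z hz =>
          mul_nonneg (hknn c z) (hwnn z hz))
    rw [← ENNReal.ofReal_le_ofReal_iff (hFnn c), heq]
    exact hl
  have hFtop : Filter.Tendsto F (nhdsWithin L (Set.Iio L)) Filter.atTop := by
    have h1 : Filter.Tendsto (fun c : ℝ => 2 + α - c * p) (nhdsWithin L (Set.Iio L))
        (nhdsWithin 0 (Set.Ioi 0)) := by
      rw [tendsto_nhdsWithin_iff]
      constructor
      · have hcont : Continuous (fun c : ℝ => 2 + α - c * p) := by continuity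
        have htendsto := (hcont.tendsto L).mono_left (nhdsWithin_le_nhds (s := Set.Iio L))
        have hval : 2 + α - L * p = 0 := by rw [hLp]; ring
        rwa [hval] at htendsto
      · refine eventually_nhdsWithin_of_forall (fun c hc => ?_)
        have hcL : c < L := hc
        have : c * p < 2 + α := by
          calc c * p < L * p := mul_lt_mul_of_pos_right hcL hp0
          _ = 2 + α := hLp
        simp only [Set.mem_Ioi]
        linarith
    have h2 : Filter.Tendsto (fun c : ℝ => (2 + α - c * p)⁻¹) (nhdsWithin L (Set.Iio L))
        Filter.atTop := tendsto_inv_nhdsGT_zero.comp h1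
    have h3 := h2.const_mul_atTop hC₀pos
    refine tendsto_atTop_mono' _ ?_ h3
    filter_upwards [hmem] with c hc
    calc C₀ * (2+α-c*p)⁻¹ = C₀ / (2+α-c*p) := (div_eq_mul_inv _ _).symm
    _ ≤ F c := hFlow c hc
  have hFpos : ∀ᶠ c in nhdsWithin L (Set.Iio L), 0 < F c := hFtop.eventually_gt_atTop 0
  -- integrability of w and its integral
  have hWint : IntegrableOn w (ball (0:ℂ) 1) := by
    refine Measure.integrableOn_of_bounded (M := 1 + α) measure_ball_lt_top.ne
      (contOn_w α hα).aestronglyMeasurable ?_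
    refine (ae_restrict_mem measurableSet_ball).mono fun z hz => ?_
    have hz1 : ‖z‖ < 1 := by simpa [Complex.dist_eq] using hz
    have hb0 : (0:ℝ) ≤ 1 - ‖z‖ ^ 2 := by nlinarith [norm_nonneg z]
    have h1 : (1 - ‖z‖ ^ 2) ^ α ≤ 1 :=
      Real.rpow_le_one hb0 (by nlinarith [norm_nonneg z]) hα
    rw [Real.norm_of_nonneg (hwnn z hz)]
    simp only [hw]
    nlinarith [Real.rpow_nonneg hb0 α, mul_le_mul_of_nonneg_left h1 (by linarith : (0:ℝ) ≤ 1+α)]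
  set W : ℝ := ∫ z in ball (0:ℂ) 1, w z with hWdef
  have hWnn : 0 ≤ W := setIntegral_nonneg measurableSet_ball hwnn
  -- MAIN: tendsto of G/F
  have hGF : Filter.Tendsto (fun c => G c / F c) (nhdsWithin L (Set.Iio L)) (nhds a) := by
    rw [Metric.tendsto_nhds]
    intro η hη
    have hξS : ξ ∈ closedBall (0:ℂ) 1 ∩ ball ξ ε := by
      constructor
      · simp only [mem_closedBall, Complex.dist_eq, sub_zero, hξ, le_refl]
      · exact mem_ball_self hε
    have hcontξ : ContinuousWithinAt (fun z => ‖g z‖ ^ p)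
        (closedBall (0:ℂ) 1 ∩ ball ξ ε) ξ :=
      (continuous_norm.continuousAt.comp_continuousWithinAt (hgcont ξ hξS)).rpow_const (Or.inr hp0.le)
    obtain ⟨r₀, hr₀, hr⟩ := Metric.continuousWithinAt_iff.1 hcontξ (η/4) (by linarith)
    set r : ℝ := min r₀ (min ε 1) with hrdef
    have hrpos : 0 < r := lt_min hr₀ (lt_min hε one_pos)
    have hr1 : r ≤ 1 := le_trans (min_le_right _ _) (min_le_right _ _)
    have hrε : r ≤ ε := le_trans (min_le_right _ _) (min_le_left _ _)
    have hrr0 : r ≤ r₀ := min_le_left _ _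
    set M : ℝ := ((C' ^ p + a) * r ^ (-(2+α))) * W with hM
    have hMnn : 0 ≤ M := by
      refine mul_nonneg (mul_nonneg ?_ (Real.rpow_nonneg hrpos.le _)) hWnn
      have : (0:ℝ) ≤ C' ^ p := Real.rpow_nonneg (le_max_right _ _) _
      linarith
    -- the key error estimate
    have hkey : ∀ c ∈ Set.Ioo (α/p) L, |G c - a * F c| ≤ η/4 * F c + M := by
      intro c hc
      obtain ⟨h1, h2⟩ := hcm c hc
      have hIGc := hIG c hc
      have hIFc := hIF c hc
      have hIu : IntegrableOn (fun z => (‖g z‖ ^ p - a) * (k c z * w z))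
          (ball (0:ℂ) 1) := by
        refine (hIGc.sub (hIFc.const_mul a)).congr (Filter.Eventually.of_forall fun z => ?_)
        simp only [Pi.sub_apply]
        ring
      have hGsub : G c - a * F c
          = ∫ z in ball (0:ℂ) 1, (‖g z‖^p - a) * (k c z * w z) := by
        simp only [hG, hF]
        rw [← integral_const_mul a, ← integral_sub hIGc (hIFc.const_mul a)]
        refine integral_congr_ae (Filter.Eventually.of_forall fun z => ?_)
        ring
      rw [hGsub]
      have hsplit := integral_inter_add_diff (s := ball (0:ℂ) 1) (t := ball ξ r)
        measurableSet_ball hIu.abs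
      have hnear : ∫ z in ball (0:ℂ) 1 ∩ ball ξ r,
          |(‖g z‖^p - a) * (k c z * w z)| ≤ η/4 * F c := by
        have hstep : ∫ z in ball (0:ℂ) 1 ∩ ball ξ r,
            |(‖g z‖^p - a) * (k c z * w z)|
            ≤ ∫ z in ball (0:ℂ) 1 ∩ ball ξ r, η/4 * (k c z * w z) := by
          refine setIntegral_mono_on (IntegrableOn.mono_set hIu.abs Set.inter_subset_left)
            (IntegrableOn.mono_set (hIFc.const_mul (η/4)) Set.inter_subset_left)
            (measurableSet_ball.inter measurableSet_ball) (fun z hz => ?_)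
          obtain ⟨hz1, hz2⟩ := hz
          have hzS : z ∈ closedBall (0:ℂ) 1 ∩ ball ξ ε :=
            ⟨ball_subset_closedBall hz1, ball_subset_ball hrε hz2⟩
          have hdist : dist z ξ < r₀ := lt_of_lt_of_le (by simpa [mem_ball] using hz2) hrr0
          have habs : |‖g z‖^p - a| < η/4 := by
            have := hr hzS hdist
            rwa [Real.dist_eq] at this
          rw [abs_mul, abs_of_nonneg (mul_nonneg (hknn c z) (hwnn z hz1))]
          exact mul_le_mul_of_nonneg_right habs.le (mul_nonneg (hknn c z) (hwnn z hz1))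
        have hstep2 : ∫ z in ball (0:ℂ) 1 ∩ ball ξ r, η/4 * (k c z * w z) ≤ η/4 * F c := by
          rw [integral_const_mul]
          refine mul_le_mul_of_nonneg_left ?_ (by linarith)
          refine setIntegral_mono_set hIFc ?_ (HasSubset.Subset.eventuallyLE Set.inter_subset_left)
          exact (ae_restrict_mem measurableSet_ball).mono fun z hz =>
            mul_nonneg (hknn c z) (hwnn z hz)
        linarith
      have hfar : ∫ z in ball (0:ℂ) 1 \ ball ξ r,
          |(‖g z‖^p - a) * (k c z * w z)| ≤ M := by
        have hstep : ∫ z in ball (0:ℂ) 1 \ ball ξ r,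
            |(‖g z‖^p - a) * (k c z * w z)|
            ≤ ∫ z in ball (0:ℂ) 1 \ ball ξ r, ((C' ^ p + a) * r ^ (-(2+α))) * w z := by
          refine setIntegral_mono_on (IntegrableOn.mono_set hIu.abs Set.diff_subset)
            (IntegrableOn.mono_set (hWint.const_mul _) Set.diff_subset)
            (measurableSet_ball.diff measurableSet_ball) (fun z hz => ?_)
          obtain ⟨hz1, hz2⟩ := hz
          have hge : r ≤ ‖ξ - z‖ := by
            have : ¬ dist z ξ < r := by simpa [mem_ball] using hz2
            rw [Complex.dist_eq] at this
            rw [norm_sub_rev]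
            linarith [not_lt.1 this]
          have hcp0 : (0:ℝ) ≤ c * p := le_trans hα h1.le
          have hk1 : k c z ≤ r ^ (-(c*p)) :=
            Real.rpow_le_rpow_of_nonpos hrpos hge (by linarith)
          have hk2 : r ^ (-(c*p)) ≤ r ^ (-(2+α)) :=
            Real.rpow_le_rpow_of_exponent_ge hrpos hr1 (by linarith)
          have habs : |‖g z‖^p - a| ≤ C' ^ p + a := by
            calc |‖g z‖^p - a| ≤ |‖g z‖^p| + |a| := abs_sub _ _
            _ ≤ C' ^ p + a := by
                rw [abs_of_nonneg hann]
                exact add_le_add_left (hgb z hz1) a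
          rw [abs_mul, abs_of_nonneg (mul_nonneg (hknn c z) (hwnn z hz1))]
          have hCpa : (0:ℝ) ≤ C' ^ p + a := le_trans (abs_nonneg _) habs
          calc |‖g z‖^p - a| * (k c z * w z)
              ≤ (C' ^ p + a) * (k c z * w z) :=
                mul_le_mul_of_nonneg_right habs (mul_nonneg (hknn c z) (hwnn z hz1))
            _ ≤ (C' ^ p + a) * (r ^ (-(2+α)) * w z) := by
                refine mul_le_mul_of_nonneg_left ?_ hCpa
                exact mul_le_mul_of_nonneg_right (le_trans hk1 hk2) (hwnn z hz1)
            _ = ((C' ^ p + a) * r ^ (-(2+α))) * w z := by ring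
        have hstep2 : ∫ z in ball (0:ℂ) 1 \ ball ξ r, ((C' ^ p + a) * r ^ (-(2+α))) * w z
            ≤ M := by
          rw [integral_const_mul, hM]
          refine mul_le_mul_of_nonneg_left ?_ ?_
          · refine setIntegral_mono_set hWint ?_
              (HasSubset.Subset.eventuallyLE Set.diff_subset)
            exact (ae_restrict_mem measurableSet_ball).mono hwnn
          · refine mul_nonneg ?_ (Real.rpow_nonneg hrpos.le _)
            have : (0:ℝ) ≤ C' ^ p := Real.rpow_nonneg (le_max_right _ _) _
            linarith
        linarith
      calc |∫ z in ball (0:ℂ) 1, (‖g z‖^p - a) * (k c z * w z)|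
          ≤ ∫ z in ball (0:ℂ) 1, |(‖g z‖^p - a) * (k c z * w z)| := by
            have hni := norm_integral_le_integral_norm (μ := volume.restrict (ball (0:ℂ) 1))
              (fun z => (‖g z‖^p - a) * (k c z * w z))
            simp only [Real.norm_eq_abs] at hni
            exact hni
        _ = (∫ z in ball (0:ℂ) 1 ∩ ball ξ r, |(‖g z‖^p - a) * (k c z * w z)|)
            + ∫ z in ball (0:ℂ) 1 \ ball ξ r, |(‖g z‖^p - a) * (k c z * w z)| :=
            hsplit.symm
        _ ≤ η/4 * F c + M := add_le_add hnear hfar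
    -- conclude
    have hFbig : ∀ᶠ c in nhdsWithin L (Set.Iio L), max 1 (M / (η/4)) < F c :=
      hFtop.eventually_gt_atTop _
    filter_upwards [hmem, hFpos, hFbig] with c hc hcF hcB
    rw [Real.dist_eq]
    have hFne : F c ≠ 0 := hcF.ne'
    have heq1 : G c / F c - a = (G c - a * F c) / F c := by field_simp
    rw [heq1, abs_div, abs_of_pos hcF]
    have h2 := hkey c hc
    have h4 : M ≤ η/4 * F c := by
      have hM4 : M / (η/4) < F c := lt_of_le_of_lt (le_max_right _ _) hcB
      have hη4 : (0:ℝ) < η/4 := by linarith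
      calc M = (M / (η/4)) * (η/4) := by field_simp
      _ ≤ F c * (η/4) := mul_le_mul_of_nonneg_right hM4.le hη4.le
      _ = η/4 * F c := mul_comm _ _
    calc |G c - a * F c| / F c ≤ (η/4 * F c + M) / F c := (div_le_div_iff_of_pos_right hcF).2 h2
    _ ≤ (η/4 * F c + η/4 * F c) / F c := (div_le_div_iff_of_pos_right hcF).2 (by linarith)
    _ = η/2 := by field_simp; ring
    _ < η := by linarith
  -- final conversion from G/F to the bergNorm ratio
  have hfinal : ∀ᶠ c in nhdsWithin L (Set.Iio L),
      (G c / F c) ^ (1/p)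
        = bergNorm p α (fun z => (ξ - z) ^ (-(c : ℂ)) * g z) /
            bergNorm p α (fun z => (ξ - z) ^ (-(c : ℂ))) := by
    filter_upwards [hmem] with c hc
    have hbergG : bergNorm p α (fun z => (ξ - z) ^ (-(c : ℂ)) * g z) = (G c) ^ (1/p) := by
      unfold bergNorm
      congr 1
      refine setIntegral_congr_fun measurableSet_ball (fun z hz => ?_)
      have h0 : (0:ℝ) ≤ ‖ξ - z‖ := norm_nonneg _
      have hcast : (-(c:ℂ)) = (((-c : ℝ)) : ℂ) := by push_cast; ring
      rw [norm_mul, hcast, Complex.norm_cpow_real,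
        Real.mul_rpow (Real.rpow_nonneg h0 _) (norm_nonneg _),
        ← Real.rpow_mul h0, neg_mul]
      show ‖ξ - z‖ ^ (-(c * p)) * ‖g z‖ ^ p * w z
          = ‖g z‖ ^ p * (k c z * w z)
      rw [hk]
      ring
    have hbergF : bergNorm p α (fun z => (ξ - z) ^ (-(c : ℂ))) = (F c) ^ (1/p) := by
      unfold bergNorm
      congr 1
      refine setIntegral_congr_fun measurableSet_ball (fun z hz => ?_)
      have h0 : (0:ℝ) ≤ ‖ξ - z‖ := norm_nonneg _
      have hcast : (-(c:ℂ)) = (((-c : ℝ)) : ℂ) := by push_cast; ring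
      rw [hcast, Complex.norm_cpow_real, ← Real.rpow_mul h0, neg_mul]
    rw [hbergG, hbergF, ← Real.div_rpow (hGnn c) (hFnn c)]
  have hlim : Filter.Tendsto (fun c => (G c / F c) ^ (1/p)) (nhdsWithin L (Set.Iio L))
      (nhds (a ^ (1/p))) := hGF.rpow_const (Or.inr (by positivity))
  have hval : a ^ (1/p) = ‖g ξ‖ := by
    rw [ha, ← Real.rpow_mul (norm_nonneg _), mul_one_div, div_self hp0.ne',
      Real.rpow_one]
  rw [hval] at hlim
  exact hlim.congr' hfinal
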